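/- For every integer n > 5 coprime to 6, 2·s(1,1;n) - 2·s(1,2;n) + s(1,4;n) - s(1,3;n) + s(1, 2·3⁻¹; n) - s(1, 4·3⁻¹; n) > 0, where 3⁻¹ denotes the inverse of 3 modulo n. -/

import Mathlib

/-- The sawtooth function `((x)) = x - ⌊x⌋ - 1/2` for non-integer `x`, and `0` for integer `x`. -/
def saw (x : ℚ) : ℚ := if x.den = 1 then 0 else x - ⌊x⌋ - 1/2

/-- The generalized Dedekind sum `s(a,b;n) = ∑_{i=1}^{n-1} ((ia/n))((ib/n))`. -/
def dS (a b : ℤ) (n : ℕ) : ℚ :=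
  ∑ i ∈ Finset.range n, saw (i * a / n) * saw (i * b / n)

open Finset

lemma den_one_add_int {x : ℚ} (k : ℤ) (h : x.den = 1) : (x + k).den = 1 := by
  rw [Rat.den_eq_one_iff] at h
  have : x + k = ((x.num + k : ℤ) : ℚ) := by push_cast; rw [h]
  rw [this, Rat.den_intCast]

lemma saw_add_int (x : ℚ) (k : ℤ) : saw (x + k) = saw x := by
  unfold saw
  by_cases h : x.den = 1
  · rw [if_pos h, if_pos (den_one_add_int k h)]
  · rw [if_neg h, if_neg (fun hh => h (by
      have := den_one_add_int (-k) hh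
      simpa using this)), Int.floor_add_intCast]
    push_cast; ring

lemma saw_int_div_congr (n : ℕ) (hn : 0 < n) (a b : ℤ) (h : (n:ℤ) ∣ a - b) :
    saw ((a:ℚ)/n) = saw ((b:ℚ)/n) := by
  obtain ⟨k, hk⟩ := h
  have hn' : (n:ℚ) ≠ 0 := Nat.cast_ne_zero.mpr hn.ne'
  have : (a:ℚ)/n = (b:ℚ)/n + (k:ℤ) := by
    field_simp
    have : (a:ℚ) = b + n * k := by exact_mod_cast congrArg (fun z : ℤ => (z:ℚ)) (by linarith [hk])
    rw [this]
  rw [this, saw_add_int]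

lemma saw_zero : saw 0 = 0 := by simp [saw]

lemma saw_mul_div (n i k : ℕ) (hn : n ≠ 0) (hnd : ¬ n ∣ k*i) :
    saw ((i:ℚ) * k / n) = (k*i : ℚ)/n - ((k*i/n : ℕ) : ℚ) - 1/2 := by
  have h1 : (i:ℚ)*k/n = ((k*i:ℕ):ℚ)/n := by push_cast; ring
  rw [h1]
  unfold saw
  rw [if_neg (by rw [Rat.den_div_natCast_eq_one_iff _ _ hn]; exact hnd)]
  have hfl : ((⌊((k*i:ℕ):ℚ)/(n:ℚ)⌋ : ℤ) : ℚ) = ((k*i/n : ℕ) : ℚ) := by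
    rw [Rat.floor_natCast_div_natCast]
    norm_cast
  rw [hfl]
  push_cast
  ring

lemma saw_div (n i : ℕ) (h0 : 0 < i) (hi : i < n) :
    saw ((i:ℚ)/n) = (i:ℚ)/n - 1/2 := by
  have hnd : ¬ n ∣ 1*i := by
    rw [one_mul]; rintro ⟨t, rfl⟩
    rcases t with _ | t
    · omega
    · have : n ≤ n * (t+1) := Nat.le_mul_of_pos_right n (by omega)
      omega
  have := saw_mul_div n i 1 (by omega) hnd
  rw [one_mul] at this
  rw [show (i:ℚ)/n = (i:ℚ)*(1:ℕ)/n by push_cast; ring, this]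
  have : i / n = 0 := Nat.div_eq_of_lt hi
  rw [this]
  push_cast; ring

/-- combined summand -/
def G (n i : ℕ) : ℚ :=
  2 * saw ((i:ℚ)/n) * saw ((i:ℚ)/n) - 2 * saw ((i:ℚ)/n) * saw ((i:ℚ)*2/n)
    + saw ((i:ℚ)/n) * saw ((i:ℚ)*4/n) - saw ((i:ℚ)/n) * saw ((i:ℚ)*3/n)
    + saw ((i:ℚ)*3/n) * saw ((i:ℚ)*2/n) - saw ((i:ℚ)*3/n) * saw ((i:ℚ)*4/n)

lemma G_zero (n : ℕ) : G n 0 = 0 := by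
  simp [G, saw_zero]

def f1 (m : ℕ) : ℚ := (m:ℚ)*((m:ℚ)-1)/2
def f2 (m : ℕ) : ℚ := (m:ℚ)*((m:ℚ)-1)*(2*(m:ℚ)-1)/6

lemma sum_range_cast (m : ℕ) : ∑ i ∈ range m, (i:ℚ) = f1 m := by
  induction m with
  | zero => simp [f1]
  | succ k ih => rw [Finset.sum_range_succ, ih]; unfold f1; push_cast; ring

lemma sum_range_sq (m : ℕ) : ∑ i ∈ range m, (i:ℚ)^2 = f2 m := by
  induction m with
  | zero => simp [f2]
  | succ k ih => rw [Finset.sum_range_succ, ih]; unfold f2; push_cast; ring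

lemma sum_range_quad (A B C : ℚ) (m : ℕ) :
    ∑ i ∈ range m, (A*(i:ℚ)^2 + B*(i:ℚ) + C) = A * f2 m + B * f1 m + C * m := by
  rw [Finset.sum_add_distrib, Finset.sum_add_distrib, ← Finset.mul_sum, ← Finset.mul_sum,
    sum_range_cast, sum_range_sq, Finset.sum_const, Finset.card_range, nsmul_eq_mul, mul_comm (m:ℚ) C]

lemma sum_Ico_quad (A B C : ℚ) (a b : ℕ) (hab : a ≤ b) :
    ∑ i ∈ Finset.Ico a b, (A*(i:ℚ)^2 + B*(i:ℚ) + C)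
      = A * (f2 b - f2 a) + B * (f1 b - f1 a) + C * ((b:ℚ) - a) := by
  have h := Finset.sum_Ico_consecutive (fun i : ℕ => (A*(i:ℚ)^2 + B*(i:ℚ) + C))
    (Nat.zero_le a) hab
  rw [← Finset.range_eq_Ico, ← Finset.range_eq_Ico] at h
  rw [sum_range_quad A B C a, sum_range_quad A B C b] at h
  linarith [h]

lemma G_eq (n i : ℕ) (hn : n ≠ 0)
    (h2 : ¬ n ∣ 2*i) (h3 : ¬ n ∣ 3*i) (h4 : ¬ n ∣ 4*i)
    (hi0 : 0 < i) (hin : i < n) (e2 e3 e4 : ℕ)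
    (he2 : 2*i/n = e2) (he3 : 3*i/n = e3) (he4 : 4*i/n = e4) :
    G n i = (-7/(n:ℚ)^2) * (i:ℚ)^2
      + ((3/2 + 2*(e4:ℚ) + 3*(e3:ℚ) - (e2:ℚ))/n) * (i:ℚ)
      + (-(e3:ℚ)/2 - (e3:ℚ)*(e4:ℚ) - (e2:ℚ)/2 + (e2:ℚ)*(e3:ℚ)) := by
  unfold G
  rw [saw_div n i hi0 hin,
    show ((i:ℚ)*2/n) = ((i:ℚ)*((2:ℕ):ℚ)/n) by norm_num,
    show ((i:ℚ)*3/n) = ((i:ℚ)*((3:ℕ):ℚ)/n) by norm_num,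
    show ((i:ℚ)*4/n) = ((i:ℚ)*((4:ℕ):ℚ)/n) by norm_num,
    saw_mul_div n i 2 hn h2, saw_mul_div n i 3 hn h3,
    saw_mul_div n i 4 hn h4, he2, he3, he4]
  push_cast
  ring

lemma sum_G_Ico (n : ℕ) (hn : n ≠ 0)
    (hc2 : Nat.Coprime n 2) (hc3 : Nat.Coprime n 3) (hc4 : Nat.Coprime n 4)
    (a b : ℕ) (ha : 0 < a) (hab : a ≤ b) (hbn : b ≤ n) (e2 e3 e4 : ℕ)
    (he : ∀ i, a ≤ i → i < b → 2*i/n = e2 ∧ 3*i/n = e3 ∧ 4*i/n = e4) :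
    ∑ i ∈ Finset.Ico a b, G n i
      = (-7/(n:ℚ)^2) * (f2 b - f2 a)
      + ((3/2 + 2*(e4:ℚ) + 3*(e3:ℚ) - (e2:ℚ))/n) * (f1 b - f1 a)
      + (-(e3:ℚ)/2 - (e3:ℚ)*(e4:ℚ) - (e2:ℚ)/2 + (e2:ℚ)*(e3:ℚ)) * ((b:ℚ) - a) := by
  rw [← sum_Ico_quad _ _ _ a b hab]
  apply Finset.sum_congr rfl
  intro i hi
  rw [Finset.mem_Ico] at hi
  have hi0 : 0 < i := lt_of_lt_of_le ha hi.1
  have hin : i < n := lt_of_lt_of_le hi.2 hbn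
  have hnd : ∀ k : ℕ, Nat.Coprime n k → ¬ n ∣ k*i := by
    intro k hk hdvd
    have : n ∣ i := hk.dvd_of_dvd_mul_left hdvd
    rcases this with ⟨t, rfl⟩
    rcases t with _ | t
    · omega
    · have : n ≤ n * (t+1) := Nat.le_mul_of_pos_right n (by omega)
      omega
  obtain ⟨q2, q3, q4⟩ := he i hi.1 hi.2
  exact G_eq n i hn (hnd 2 hc2) (hnd 3 hc3) (hnd 4 hc4) hi0 hin e2 e3 e4 q2 q3 q4

lemma case1 (q n : ℕ) (hn : n = 12*q+1) (hq : 1 ≤ q)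
    (hc2 : Nat.Coprime n 2) (hc3 : Nat.Coprime n 3) (hc4 : Nat.Coprime n 4) :
    ∑ i ∈ Finset.range n, G n i = (q:ℚ) := by
  subst hn
  have hn0 : 12*q+1 ≠ 0 := by omega
  rw [Finset.range_eq_Ico, Finset.sum_eq_sum_Ico_succ_bot (by omega) (fun i => G (12*q+1) i), G_zero, zero_add]
  rw [← Finset.sum_Ico_consecutive (fun i => G (12*q+1) i) (show (1:ℕ) ≤ 3*q+1 by omega) (show (3*q+1:ℕ) ≤ 12*q+1 by omega)]
  rw [← Finset.sum_Ico_consecutive (fun i => G (12*q+1) i) (show (3*q+1:ℕ) ≤ 4*q+1 by omega) (show (4*q+1:ℕ) ≤ 12*q+1 by omega)]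
  rw [← Finset.sum_Ico_consecutive (fun i => G (12*q+1) i) (show (4*q+1:ℕ) ≤ 6*q+1 by omega) (show (6*q+1:ℕ) ≤ 12*q+1 by omega)]
  rw [← Finset.sum_Ico_consecutive (fun i => G (12*q+1) i) (show (6*q+1:ℕ) ≤ 8*q+1 by omega) (show (8*q+1:ℕ) ≤ 12*q+1 by omega)]
  rw [← Finset.sum_Ico_consecutive (fun i => G (12*q+1) i) (show (8*q+1:ℕ) ≤ 9*q+1 by omega) (show (9*q+1:ℕ) ≤ 12*q+1 by omega)]

  rw [sum_G_Ico (12*q+1) hn0 hc2 hc3 hc4 (1) (3*q+1) (by omega) (by omega) (by omega) 0 0 0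
    (fun i h1 h2 => ⟨Nat.div_eq_of_lt_le (by omega) (by omega), Nat.div_eq_of_lt_le (by omega) (by omega), Nat.div_eq_of_lt_le (by omega) (by omega)⟩)]
  rw [sum_G_Ico (12*q+1) hn0 hc2 hc3 hc4 (3*q+1) (4*q+1) (by omega) (by omega) (by omega) 0 0 1
    (fun i h1 h2 => ⟨Nat.div_eq_of_lt_le (by omega) (by omega), Nat.div_eq_of_lt_le (by omega) (by omega), Nat.div_eq_of_lt_le (by omega) (by omega)⟩)]
  rw [sum_G_Ico (12*q+1) hn0 hc2 hc3 hc4 (4*q+1) (6*q+1) (by omega) (by omega) (by omega) 0 1 1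
    (fun i h1 h2 => ⟨Nat.div_eq_of_lt_le (by omega) (by omega), Nat.div_eq_of_lt_le (by omega) (by omega), Nat.div_eq_of_lt_le (by omega) (by omega)⟩)]
  rw [sum_G_Ico (12*q+1) hn0 hc2 hc3 hc4 (6*q+1) (8*q+1) (by omega) (by omega) (by omega) 1 1 2
    (fun i h1 h2 => ⟨Nat.div_eq_of_lt_le (by omega) (by omega), Nat.div_eq_of_lt_le (by omega) (by omega), Nat.div_eq_of_lt_le (by omega) (by omega)⟩)]
  rw [sum_G_Ico (12*q+1) hn0 hc2 hc3 hc4 (8*q+1) (9*q+1) (by omega) (by omega) (by omega) 1 2 2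
    (fun i h1 h2 => ⟨Nat.div_eq_of_lt_le (by omega) (by omega), Nat.div_eq_of_lt_le (by omega) (by omega), Nat.div_eq_of_lt_le (by omega) (by omega)⟩)]
  rw [sum_G_Ico (12*q+1) hn0 hc2 hc3 hc4 (9*q+1) (12*q+1) (by omega) (by omega) (by omega) 1 2 3
    (fun i h1 h2 => ⟨Nat.div_eq_of_lt_le (by omega) (by omega), Nat.div_eq_of_lt_le (by omega) (by omega), Nat.div_eq_of_lt_le (by omega) (by omega)⟩)]
  have hq0 : ((12*q+1:ℕ):ℚ) ≠ 0 := by positivity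
  unfold f1 f2
  push_cast
  push_cast at hq0
  field_simp
  ring

lemma case5 (q n : ℕ) (hn : n = 12*q+5) (hq : 1 ≤ q)
    (hc2 : Nat.Coprime n 2) (hc3 : Nat.Coprime n 3) (hc4 : Nat.Coprime n 4) :
    ∑ i ∈ Finset.range n, G n i = (q:ℚ) := by
  subst hn
  have hn0 : 12*q+5 ≠ 0 := by omega
  rw [Finset.range_eq_Ico, Finset.sum_eq_sum_Ico_succ_bot (by omega) (fun i => G (12*q+5) i), G_zero, zero_add]
  rw [← Finset.sum_Ico_consecutive (fun i => G (12*q+5) i) (show (1:ℕ) ≤ 3*q+2 by omega) (show (3*q+2:ℕ) ≤ 12*q+5 by omega)]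
  rw [← Finset.sum_Ico_consecutive (fun i => G (12*q+5) i) (show (3*q+2:ℕ) ≤ 4*q+2 by omega) (show (4*q+2:ℕ) ≤ 12*q+5 by omega)]
  rw [← Finset.sum_Ico_consecutive (fun i => G (12*q+5) i) (show (4*q+2:ℕ) ≤ 6*q+3 by omega) (show (6*q+3:ℕ) ≤ 12*q+5 by omega)]
  rw [← Finset.sum_Ico_consecutive (fun i => G (12*q+5) i) (show (6*q+3:ℕ) ≤ 8*q+4 by omega) (show (8*q+4:ℕ) ≤ 12*q+5 by omega)]
  rw [← Finset.sum_Ico_consecutive (fun i => G (12*q+5) i) (show (8*q+4:ℕ) ≤ 9*q+4 by omega) (show (9*q+4:ℕ) ≤ 12*q+5 by omega)]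

  rw [sum_G_Ico (12*q+5) hn0 hc2 hc3 hc4 (1) (3*q+2) (by omega) (by omega) (by omega) 0 0 0
    (fun i h1 h2 => ⟨Nat.div_eq_of_lt_le (by omega) (by omega), Nat.div_eq_of_lt_le (by omega) (by omega), Nat.div_eq_of_lt_le (by omega) (by omega)⟩)]
  rw [sum_G_Ico (12*q+5) hn0 hc2 hc3 hc4 (3*q+2) (4*q+2) (by omega) (by omega) (by omega) 0 0 1
    (fun i h1 h2 => ⟨Nat.div_eq_of_lt_le (by omega) (by omega), Nat.div_eq_of_lt_le (by omega) (by omega), Nat.div_eq_of_lt_le (by omega) (by omega)⟩)]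
  rw [sum_G_Ico (12*q+5) hn0 hc2 hc3 hc4 (4*q+2) (6*q+3) (by omega) (by omega) (by omega) 0 1 1
    (fun i h1 h2 => ⟨Nat.div_eq_of_lt_le (by omega) (by omega), Nat.div_eq_of_lt_le (by omega) (by omega), Nat.div_eq_of_lt_le (by omega) (by omega)⟩)]
  rw [sum_G_Ico (12*q+5) hn0 hc2 hc3 hc4 (6*q+3) (8*q+4) (by omega) (by omega) (by omega) 1 1 2
    (fun i h1 h2 => ⟨Nat.div_eq_of_lt_le (by omega) (by omega), Nat.div_eq_of_lt_le (by omega) (by omega), Nat.div_eq_of_lt_le (by omega) (by omega)⟩)]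
  rw [sum_G_Ico (12*q+5) hn0 hc2 hc3 hc4 (8*q+4) (9*q+4) (by omega) (by omega) (by omega) 1 2 2
    (fun i h1 h2 => ⟨Nat.div_eq_of_lt_le (by omega) (by omega), Nat.div_eq_of_lt_le (by omega) (by omega), Nat.div_eq_of_lt_le (by omega) (by omega)⟩)]
  rw [sum_G_Ico (12*q+5) hn0 hc2 hc3 hc4 (9*q+4) (12*q+5) (by omega) (by omega) (by omega) 1 2 3
    (fun i h1 h2 => ⟨Nat.div_eq_of_lt_le (by omega) (by omega), Nat.div_eq_of_lt_le (by omega) (by omega), Nat.div_eq_of_lt_le (by omega) (by omega)⟩)]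
  have hq0 : ((12*q+5:ℕ):ℚ) ≠ 0 := by positivity
  unfold f1 f2
  push_cast
  push_cast at hq0
  field_simp
  ring

lemma case7 (q n : ℕ) (hn : n = 12*q+7) (hq : 0 ≤ q)
    (hc2 : Nat.Coprime n 2) (hc3 : Nat.Coprime n 3) (hc4 : Nat.Coprime n 4) :
    ∑ i ∈ Finset.range n, G n i = (q:ℚ)+1 := by
  subst hn
  have hn0 : 12*q+7 ≠ 0 := by omega
  rw [Finset.range_eq_Ico, Finset.sum_eq_sum_Ico_succ_bot (by omega) (fun i => G (12*q+7) i), G_zero, zero_add]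
  rw [← Finset.sum_Ico_consecutive (fun i => G (12*q+7) i) (show (1:ℕ) ≤ 3*q+2 by omega) (show (3*q+2:ℕ) ≤ 12*q+7 by omega)]
  rw [← Finset.sum_Ico_consecutive (fun i => G (12*q+7) i) (show (3*q+2:ℕ) ≤ 4*q+3 by omega) (show (4*q+3:ℕ) ≤ 12*q+7 by omega)]
  rw [← Finset.sum_Ico_consecutive (fun i => G (12*q+7) i) (show (4*q+3:ℕ) ≤ 6*q+4 by omega) (show (6*q+4:ℕ) ≤ 12*q+7 by omega)]
  rw [← Finset.sum_Ico_consecutive (fun i => G (12*q+7) i) (show (6*q+4:ℕ) ≤ 8*q+5 by omega) (show (8*q+5:ℕ) ≤ 12*q+7 by omega)]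
  rw [← Finset.sum_Ico_consecutive (fun i => G (12*q+7) i) (show (8*q+5:ℕ) ≤ 9*q+6 by omega) (show (9*q+6:ℕ) ≤ 12*q+7 by omega)]

  rw [sum_G_Ico (12*q+7) hn0 hc2 hc3 hc4 (1) (3*q+2) (by omega) (by omega) (by omega) 0 0 0
    (fun i h1 h2 => ⟨Nat.div_eq_of_lt_le (by omega) (by omega), Nat.div_eq_of_lt_le (by omega) (by omega), Nat.div_eq_of_lt_le (by omega) (by omega)⟩)]
  rw [sum_G_Ico (12*q+7) hn0 hc2 hc3 hc4 (3*q+2) (4*q+3) (by omega) (by omega) (by omega) 0 0 1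
    (fun i h1 h2 => ⟨Nat.div_eq_of_lt_le (by omega) (by omega), Nat.div_eq_of_lt_le (by omega) (by omega), Nat.div_eq_of_lt_le (by omega) (by omega)⟩)]
  rw [sum_G_Ico (12*q+7) hn0 hc2 hc3 hc4 (4*q+3) (6*q+4) (by omega) (by omega) (by omega) 0 1 1
    (fun i h1 h2 => ⟨Nat.div_eq_of_lt_le (by omega) (by omega), Nat.div_eq_of_lt_le (by omega) (by omega), Nat.div_eq_of_lt_le (by omega) (by omega)⟩)]
  rw [sum_G_Ico (12*q+7) hn0 hc2 hc3 hc4 (6*q+4) (8*q+5) (by omega) (by omega) (by omega) 1 1 2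
    (fun i h1 h2 => ⟨Nat.div_eq_of_lt_le (by omega) (by omega), Nat.div_eq_of_lt_le (by omega) (by omega), Nat.div_eq_of_lt_le (by omega) (by omega)⟩)]
  rw [sum_G_Ico (12*q+7) hn0 hc2 hc3 hc4 (8*q+5) (9*q+6) (by omega) (by omega) (by omega) 1 2 2
    (fun i h1 h2 => ⟨Nat.div_eq_of_lt_le (by omega) (by omega), Nat.div_eq_of_lt_le (by omega) (by omega), Nat.div_eq_of_lt_le (by omega) (by omega)⟩)]
  rw [sum_G_Ico (12*q+7) hn0 hc2 hc3 hc4 (9*q+6) (12*q+7) (by omega) (by omega) (by omega) 1 2 3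
    (fun i h1 h2 => ⟨Nat.div_eq_of_lt_le (by omega) (by omega), Nat.div_eq_of_lt_le (by omega) (by omega), Nat.div_eq_of_lt_le (by omega) (by omega)⟩)]
  have hq0 : ((12*q+7:ℕ):ℚ) ≠ 0 := by positivity
  unfold f1 f2
  push_cast
  push_cast at hq0
  field_simp
  ring

lemma case11 (q n : ℕ) (hn : n = 12*q+11) (hq : 0 ≤ q)
    (hc2 : Nat.Coprime n 2) (hc3 : Nat.Coprime n 3) (hc4 : Nat.Coprime n 4) :
    ∑ i ∈ Finset.range n, G n i = (q:ℚ)+1 := by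
  subst hn
  have hn0 : 12*q+11 ≠ 0 := by omega
  rw [Finset.range_eq_Ico, Finset.sum_eq_sum_Ico_succ_bot (by omega) (fun i => G (12*q+11) i), G_zero, zero_add]
  rw [← Finset.sum_Ico_consecutive (fun i => G (12*q+11) i) (show (1:ℕ) ≤ 3*q+3 by omega) (show (3*q+3:ℕ) ≤ 12*q+11 by omega)]
  rw [← Finset.sum_Ico_consecutive (fun i => G (12*q+11) i) (show (3*q+3:ℕ) ≤ 4*q+4 by omega) (show (4*q+4:ℕ) ≤ 12*q+11 by omega)]
  rw [← Finset.sum_Ico_consecutive (fun i => G (12*q+11) i) (show (4*q+4:ℕ) ≤ 6*q+6 by omega) (show (6*q+6:ℕ) ≤ 12*q+11 by omega)]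
  rw [← Finset.sum_Ico_consecutive (fun i => G (12*q+11) i) (show (6*q+6:ℕ) ≤ 8*q+8 by omega) (show (8*q+8:ℕ) ≤ 12*q+11 by omega)]
  rw [← Finset.sum_Ico_consecutive (fun i => G (12*q+11) i) (show (8*q+8:ℕ) ≤ 9*q+9 by omega) (show (9*q+9:ℕ) ≤ 12*q+11 by omega)]

  rw [sum_G_Ico (12*q+11) hn0 hc2 hc3 hc4 (1) (3*q+3) (by omega) (by omega) (by omega) 0 0 0
    (fun i h1 h2 => ⟨Nat.div_eq_of_lt_le (by omega) (by omega), Nat.div_eq_of_lt_le (by omega) (by omega), Nat.div_eq_of_lt_le (by omega) (by omega)⟩)]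
  rw [sum_G_Ico (12*q+11) hn0 hc2 hc3 hc4 (3*q+3) (4*q+4) (by omega) (by omega) (by omega) 0 0 1
    (fun i h1 h2 => ⟨Nat.div_eq_of_lt_le (by omega) (by omega), Nat.div_eq_of_lt_le (by omega) (by omega), Nat.div_eq_of_lt_le (by omega) (by omega)⟩)]
  rw [sum_G_Ico (12*q+11) hn0 hc2 hc3 hc4 (4*q+4) (6*q+6) (by omega) (by omega) (by omega) 0 1 1
    (fun i h1 h2 => ⟨Nat.div_eq_of_lt_le (by omega) (by omega), Nat.div_eq_of_lt_le (by omega) (by omega), Nat.div_eq_of_lt_le (by omega) (by omega)⟩)]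
  rw [sum_G_Ico (12*q+11) hn0 hc2 hc3 hc4 (6*q+6) (8*q+8) (by omega) (by omega) (by omega) 1 1 2
    (fun i h1 h2 => ⟨Nat.div_eq_of_lt_le (by omega) (by omega), Nat.div_eq_of_lt_le (by omega) (by omega), Nat.div_eq_of_lt_le (by omega) (by omega)⟩)]
  rw [sum_G_Ico (12*q+11) hn0 hc2 hc3 hc4 (8*q+8) (9*q+9) (by omega) (by omega) (by omega) 1 2 2
    (fun i h1 h2 => ⟨Nat.div_eq_of_lt_le (by omega) (by omega), Nat.div_eq_of_lt_le (by omega) (by omega), Nat.div_eq_of_lt_le (by omega) (by omega)⟩)]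
  rw [sum_G_Ico (12*q+11) hn0 hc2 hc3 hc4 (9*q+9) (12*q+11) (by omega) (by omega) (by omega) 1 2 3
    (fun i h1 h2 => ⟨Nat.div_eq_of_lt_le (by omega) (by omega), Nat.div_eq_of_lt_le (by omega) (by omega), Nat.div_eq_of_lt_le (by omega) (by omega)⟩)]
  have hq0 : ((12*q+11:ℕ):ℚ) ≠ 0 := by positivity
  unfold f1 f2
  push_cast
  push_cast at hq0
  field_simp
  ring

lemma dS_reindex (n : ℕ) (hn : 1 < n) (c b : ℤ)
    (hdvd : (n:ℤ) ∣ 3*c - 1) : dS 1 (b*c) n = dS 3 b n := by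
  unfold dS
  have hn0 : 0 < n := by omega
  set c' : ℕ := (c % (n:ℤ)).toNat with hc'def
  have hc'' : (c' : ℤ) = c % n :=
    Int.toNat_of_nonneg (Int.emod_nonneg c (by exact_mod_cast hn0.ne'))
  have hcc : (c' : ℤ) ≡ c [ZMOD (n:ℤ)] := by
    rw [hc'']; exact Int.emod_emod_of_dvd c dvd_rfl
  have h3cZ : (3*(c':ℤ)) ≡ 1 [ZMOD (n:ℤ)] := by
    calc (3*(c':ℤ)) ≡ 3*c [ZMOD (n:ℤ)] := hcc.mul_left 3
    _ ≡ 1 [ZMOD (n:ℤ)] := Int.ModEq.symm (Int.modEq_iff_dvd.mpr hdvd)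
  have h3cN : 3*c' ≡ 1 [MOD n] := by
    have hcast : ((1:ℕ):ℤ) - ((3*c':ℕ):ℤ) = 1 - 3*(c':ℤ) := by push_cast; ring
    rw [Nat.modEq_iff_dvd, hcast]
    exact h3cZ.dvd
  apply Finset.sum_nbij' (i := fun a => c'*a % n) (j := fun a => 3*a % n)
  · intro a _; exact Finset.mem_range.mpr (Nat.mod_lt _ hn0)
  · intro a _; exact Finset.mem_range.mpr (Nat.mod_lt _ hn0)
  · -- left inverse : 3*(c'*a % n) % n = a
    intro a ha
    rw [Finset.mem_range] at ha
    have m1 : 3*(c'*a % n) ≡ 3*(c'*a) [MOD n] :=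
      Nat.ModEq.mul_left 3 (Nat.mod_mod_of_dvd _ dvd_rfl)
    have m2 : 3*(c'*a) = (3*c')*a := by ring
    have m3 : (3*c')*a ≡ 1*a [MOD n] := h3cN.mul_right a
    have : 3*(c'*a % n) ≡ a [MOD n] := by
      calc 3*(c'*a % n) ≡ (3*c')*a [MOD n] := m2 ▸ m1
      _ ≡ 1*a [MOD n] := m3
      _ = a := one_mul a
    simpa [Nat.ModEq, Nat.mod_eq_of_lt ha] using this
  · -- right inverse : c'*(3*a % n) % n = a
    intro a ha
    rw [Finset.mem_range] at ha
    have m1 : c'*(3*a % n) ≡ c'*(3*a) [MOD n] :=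
      Nat.ModEq.mul_left c' (Nat.mod_mod_of_dvd _ dvd_rfl)
    have m2 : c'*(3*a) = (3*c')*a := by ring
    have m3 : (3*c')*a ≡ 1*a [MOD n] := h3cN.mul_right a
    have : c'*(3*a % n) ≡ a [MOD n] := by
      calc c'*(3*a % n) ≡ (3*c')*a [MOD n] := m2 ▸ m1
      _ ≡ 1*a [MOD n] := m3
      _ = a := one_mul a
    simpa [Nat.ModEq, Nat.mod_eq_of_lt ha] using this
  · -- value equality
    intro a _
    set j : ℕ := c'*a % n with hj_def
    have hj : (j : ℤ) ≡ (c':ℤ)*a [ZMOD (n:ℤ)] := by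
      rw [hj_def]
      push_cast
      exact Int.emod_emod_of_dvd _ dvd_rfl
    congr 1
    · -- saw (↑a * ↑(1:ℤ) / ↑n) = saw (↑(c'*a%n) * ↑(3:ℤ) / ↑n)
      rw [show ((a:ℚ) * ((1:ℤ):ℚ) / (n:ℚ)) = (((a:ℤ)*1 : ℤ):ℚ)/(n:ℚ) by push_cast; ring,
        show (((j : ℕ):ℚ) * ((3:ℤ):ℚ) / (n:ℚ))
          = ((((j : ℕ):ℤ)*3 : ℤ):ℚ)/(n:ℚ) by push_cast; ring]
      apply saw_int_div_congr n hn0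
      have : ((a:ℤ)*1 : ℤ) ≡ ((j : ℕ):ℤ)*3 [ZMOD (n:ℤ)] := by
        calc ((a:ℤ)*1 : ℤ) = (a:ℤ) := by ring
        _ ≡ (3*(c':ℤ))*a [ZMOD (n:ℤ)] := ((h3cZ.mul_right a).trans (by rw [one_mul])).symm
        _ = ((c':ℤ)*a)*3 := by ring
        _ ≡ ((j : ℕ):ℤ)*3 [ZMOD (n:ℤ)] := hj.symm.mul_right 3
      exact (Int.ModEq.dvd this.symm)
    · rw [show ((a:ℚ) * ((b*c:ℤ):ℚ) / (n:ℚ)) = (((a:ℤ)*(b*c) : ℤ):ℚ)/(n:ℚ) by push_cast; ring,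
        show (((j : ℕ):ℚ) * ((b:ℤ):ℚ) / (n:ℚ))
          = ((((j : ℕ):ℤ)*b : ℤ):ℚ)/(n:ℚ) by push_cast; ring]
      apply saw_int_div_congr n hn0
      have : ((a:ℤ)*(b*c) : ℤ) ≡ ((j : ℕ):ℤ)*b [ZMOD (n:ℤ)] := by
        calc ((a:ℤ)*(b*c) : ℤ) = (c*a)*b := by ring
        _ ≡ ((c':ℤ)*a)*b [ZMOD (n:ℤ)] := ((hcc.mul_right a).mul_right b).symm
        _ ≡ ((j : ℕ):ℤ)*b [ZMOD (n:ℤ)] := hj.symm.mul_right b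
      exact (Int.ModEq.dvd this.symm)

lemma combine (n : ℕ) :
    2 * dS 1 1 n - 2 * dS 1 2 n + dS 1 4 n - dS 1 3 n + dS 3 2 n - dS 3 4 n
      = ∑ i ∈ Finset.range n, G n i := by
  unfold dS G
  rw [Finset.mul_sum, Finset.mul_sum, ← Finset.sum_sub_distrib, ← Finset.sum_add_distrib,
    ← Finset.sum_sub_distrib, ← Finset.sum_add_distrib, ← Finset.sum_sub_distrib]
  apply Finset.sum_congr rfl
  intro i _
  push_cast [mul_one]
  ring

theorem stmt_11 (n : ℕ) (hn : 5 < n) (hco : Nat.Coprime n 6)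
    (c : ℤ) (hc : 3 * c ≡ 1 [ZMOD (n:ℤ)]) :
    0 < 2 * dS 1 1 n - 2 * dS 1 2 n + dS 1 4 n - dS 1 3 n
        + dS 1 (2*c) n - dS 1 (4*c) n := by
  have hn2 : Nat.Coprime n 2 := Nat.Coprime.coprime_dvd_right (by norm_num) hco
  have hn3 : Nat.Coprime n 3 := Nat.Coprime.coprime_dvd_right (by norm_num) hco
  have hn4 : Nat.Coprime n 4 := by simpa using hn2.mul_right hn2
  have hdvd : (n:ℤ) ∣ 3*c - 1 := (hc.symm).dvd
  rw [dS_reindex n (by omega) c 2 hdvd, dS_reindex n (by omega) c 4 hdvd, combine n]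
  have hd2 : ¬ (2:ℕ) ∣ n := by
    intro h
    have h6 : (2:ℕ) ∣ Nat.gcd n 6 := Nat.dvd_gcd h (by norm_num)
    rw [hco] at h6; omega
  have hd3 : ¬ (3:ℕ) ∣ n := by
    intro h
    have h6 : (3:ℕ) ∣ Nat.gcd n 6 := Nat.dvd_gcd h (by norm_num)
    rw [hco] at h6; omega
  have hmod2 : n % 2 = 1 := by omega
  have hmod3 : n % 3 ≠ 0 := fun h => hd3 (Nat.dvd_of_mod_eq_zero h)
  have hr : n % 12 = 1 ∨ n % 12 = 5 ∨ n % 12 = 7 ∨ n % 12 = 11 := by omega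
  rcases hr with h | h | h | h
  · rw [case1 (n/12) n (by omega) (by omega) hn2 hn3 hn4]
    exact_mod_cast Nat.cast_pos.mpr (show 0 < n/12 by omega)
  · rw [case5 (n/12) n (by omega) (by omega) hn2 hn3 hn4]
    exact_mod_cast Nat.cast_pos.mpr (show 0 < n/12 by omega)
  · rw [case7 (n/12) n (by omega) (by omega) hn2 hn3 hn4]
    positivity
  · rw [case11 (n/12) n (by omega) (by omega) hn2 hn3 hn4]
    positivity
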